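/- Let γ_0,…,γ_n be nonzero complex numbers with γ_k² pairwise distinct, and let m ≥ 0, ϑ ≤ m+n integers with ϑ ≡ m+n (mod 2). Then w^{m+n} / ∏_{k=0}^{n}(w²−γ_k²) = Σ_{j=0}^{(m−n−ϑ)/2−1} h_j(γ_0²,…,γ_n²) w^{m−n−2−2j} + Σ_{k=0}^{n} γ_k^{m+n−ϑ} w^ϑ / [∏_{j≠k}(γ_k²−γ_j²)(w²−γ_k²)], for all complex w with w² ≠ γ_k² for all k (and w ≠ 0 if ϑ < 0), where h_j denotes the complete homogeneous symmetric polynomial of degree j and empty sums are zero. -/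

import Mathlib

open Finset

/-- The complete homogeneous symmetric polynomial of degree `j` in the
variables `x 0, …, x (N-1)`: the sum over weakly increasing tuples
`k_1 ≤ ⋯ ≤ k_j` of the products `x k_1 ⋯ x k_j`. -/
noncomputable def hsym (N j : ℕ) (x : Fin N → ℂ) : ℂ :=
  ∑ f ∈ univ.filter (fun f : Fin j → Fin N => ∀ p q : Fin j, p ≤ q → f p ≤ f q),
    ∏ i, x (f i)

lemma lower_count {t : ℕ} (S : Finset (Fin t))
    (hS : ∀ p q : Fin t, p ≤ q → q ∈ S → p ∈ S) (p : Fin t) :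
    p ∈ S ↔ (p : ℕ) < S.card := by
  constructor
  · intro hp
    by_contra h
    push_neg at h
    have hsub : Finset.Iic p ⊆ S := fun q hq => hS q p (Finset.mem_Iic.1 hq) hp
    have := Finset.card_le_card hsub
    rw [Fin.card_Iic] at this
    omega
  · intro hp
    by_contra h
    have hsub : S ⊆ Finset.Iio p := by
      intro q hq
      rw [Finset.mem_Iio]
      by_contra hq'
      push_neg at hq'
      exact h (hS p q hq' hq)
    have := Finset.card_le_card hsub
    rw [Fin.card_Iio] at this
    omega

lemma card_val_lt {t j : ℕ} (hj : j ≤ t) :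
    (univ.filter fun p : Fin t => (p : ℕ) < j).card = j := by
  have : (univ.filter fun p : Fin t => (p : ℕ) < j) = univ.map (Fin.castLEEmb hj) := by
    ext p
    simp only [mem_filter, mem_univ, true_and, mem_map, Fin.castLEEmb, Function.Embedding.coeFn_mk]
    constructor
    · intro h; exact ⟨⟨(p : ℕ), h⟩, by ext; simp⟩
    · rintro ⟨q, rfl⟩; simp
  rw [this, Finset.card_map, Finset.card_univ, Fintype.card_fin]

/-- Extend a tuple in `Fin N` of length `j` to length `t` by padding with `last N`. -/
def extFun {N t : ℕ} (j : ℕ) (g : Fin j → Fin N) : Fin t → Fin (N + 1) :=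
  fun p => if h : (p : ℕ) < j then (g ⟨p, h⟩).castSucc else Fin.last N

lemma extFun_prod {N t j : ℕ} (hj : j ≤ t) (g : Fin j → Fin N) (x : Fin (N + 1) → ℂ) :
    ∏ i : Fin t, x (extFun j g i) = (∏ i, x ((g i).castSucc)) * x (Fin.last N) ^ (t - j) := by
  have hF : ∀ i : Fin t, x (extFun j g i) =
      (fun i : ℕ => if h : i < j then x ((g ⟨i, h⟩).castSucc) else x (Fin.last N)) (i : ℕ) := by
    intro i
    simp only [extFun]
    split <;> rfl
  calc ∏ i : Fin t, x (extFun j g i)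
      = ∏ i : Fin t, (fun i : ℕ => if h : i < j then x ((g ⟨i, h⟩).castSucc)
          else x (Fin.last N)) (i : ℕ) := Finset.prod_congr rfl fun i _ => hF i
    _ = ∏ i ∈ range t, (fun i : ℕ => if h : i < j then x ((g ⟨i, h⟩).castSucc)
          else x (Fin.last N)) i :=
          Fin.prod_univ_eq_prod_range (fun i : ℕ => if h : i < j then x ((g ⟨i, h⟩).castSucc) else x (Fin.last N)) t
    _ = (∏ i, x ((g i).castSucc)) * x (Fin.last N) ^ (t - j) := by
        rw [show t = j + (t - j) by omega, Finset.prod_range_add]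
        congr 1
        · rw [← Fin.prod_univ_eq_prod_range]
          apply Finset.prod_congr rfl
          intro i _
          simp [i.2]
        · rw [show j + (t - j) - j = t - j by omega]
          calc ∏ i ∈ range (t - j), (fun i : ℕ => if h : i < j then x ((g ⟨i, h⟩).castSucc)
                else x (Fin.last N)) (j + i)
              = ∏ _i ∈ range (t - j), x (Fin.last N) := by
                apply Finset.prod_congr rfl; intro i _; simp
            _ = x (Fin.last N) ^ (t - j) := by rw [Finset.prod_const, Finset.card_range]

def jof {N t : ℕ} (f : Fin t → Fin (N + 1)) : ℕ :=
  (univ.filter fun p => f p < Fin.last N).card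

lemma jof_le {N t : ℕ} (f : Fin t → Fin (N + 1)) : jof f ≤ t := by
  have := Finset.card_filter_le (univ : Finset (Fin t)) (fun p => f p < Fin.last N)
  simpa [jof] using this

lemma jof_lt_iff {N t : ℕ} (f : Fin t → Fin (N + 1))
    (hf : ∀ p q : Fin t, p ≤ q → f p ≤ f q) (p : Fin t) :
    f p < Fin.last N ↔ (p : ℕ) < jof f := by
  have := lower_count (univ.filter fun p => f p < Fin.last N)
    (fun p q hpq hq => by
      simp only [mem_filter, mem_univ, true_and] at hq ⊢
      exact lt_of_le_of_lt (hf p q hpq) hq) p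
  simpa [jof] using this

def gof {N t : ℕ} (f : Fin t → Fin (N + 1))
    (hf : ∀ p q : Fin t, p ≤ q → f p ≤ f q) (q : Fin (jof f)) : Fin N :=
  Fin.castPred (f (Fin.castLE (jof_le f) q))
    (by
      have : (Fin.castLE (jof_le f) q : ℕ) < jof f := q.2
      have h2 := (jof_lt_iff f hf (Fin.castLE (jof_le f) q)).2 this
      exact Fin.ne_of_lt h2)

lemma ext_gof {N t : ℕ} (f : Fin t → Fin (N + 1))
    (hf : ∀ p q : Fin t, p ≤ q → f p ≤ f q) :
    extFun (jof f) (gof f hf) = f := by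
  funext p
  simp only [extFun]
  split
  · next h =>
      simp only [gof, Fin.castSucc_castPred]
      congr 1
  · next h =>
      have hnot : ¬ (p : ℕ) < jof f := h
      have := (jof_lt_iff f hf p).not.2 hnot
      exact (le_antisymm (Fin.le_last (f p)) (not_lt.1 this)).symm

lemma jof_ext {N t j : ℕ} (hj : j ≤ t) (g : Fin j → Fin N) :
    jof (extFun j g : Fin t → Fin (N + 1)) = j := by
  unfold jof
  have hset : (univ.filter fun p : Fin t => extFun j g p < Fin.last N)
      = univ.filter fun p : Fin t => (p : ℕ) < j := by
    apply Finset.filter_congr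
    intro p _
    simp only [extFun]
    split
    · next h => simp [Fin.castSucc_lt_last, h]
    · next h => simp [h]
  rw [hset, card_val_lt hj]

lemma ext_mono {N t j : ℕ} (g : Fin j → Fin N)
    (hg : ∀ p q : Fin j, p ≤ q → g p ≤ g q) (p q : Fin t) (hpq : p ≤ q) :
    extFun j g p ≤ extFun j g q := by
  simp only [extFun]
  split
  · next hp =>
    split
    · next hq =>
      have h2 : g ⟨p, hp⟩ ≤ g ⟨q, hq⟩ := hg _ _ (by simpa [Fin.mk_le_mk] using hpq)
      exact Fin.castSucc_le_castSucc_iff.mpr h2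
    · next hq => exact Fin.le_last _
  · next hp =>
    split
    · next hq => exact absurd (lt_of_le_of_lt (show (p : ℕ) ≤ q from hpq) hq) hp
    · next hq => exact le_refl _

lemma hsym_succ (N t : ℕ) (x : Fin (N + 1) → ℂ) :
    hsym (N + 1) t x
      = ∑ j ∈ range (t + 1), hsym N j (fun i => x i.castSucc) * x (Fin.last N) ^ (t - j) := by
  unfold hsym
  simp_rw [Finset.sum_mul]
  rw [← Finset.sum_sigma (range (t + 1))
    (fun j => univ.filter (fun g : Fin j → Fin N => ∀ p q : Fin j, p ≤ q → g p ≤ g q))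
    (fun p => (∏ i, x ((p.2 i).castSucc)) * x (Fin.last N) ^ (t - p.1))]
  symm
  refine Finset.sum_bij' (i := fun (p : Σ _j : ℕ, Fin _j → Fin N) _hp => extFun p.1 p.2)
    (j := fun f hf => ⟨jof f, gof f (by simpa using (Finset.mem_filter.1 hf).2)⟩)
    ?_ ?_ ?_ ?_ ?_
  · rintro ⟨j, g⟩ hp
    simp only [Finset.mem_sigma, Finset.mem_range, Finset.mem_filter, Finset.mem_univ,
      true_and] at hp ⊢
    exact fun p q hpq => ext_mono g hp.2 p q hpq
  · intro f hf
    simp only [Finset.mem_filter, Finset.mem_univ, true_and] at hf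
    simp only [Finset.mem_sigma, Finset.mem_range, Finset.mem_filter, Finset.mem_univ, true_and]
    constructor
    · have := jof_le f; omega
    · intro p q hpq
      simp only [gof]
      have h1 : f (Fin.castLE (jof_le f) p) ≤ f (Fin.castLE (jof_le f) q) :=
        hf _ _ (by rw [Fin.le_def]; simpa using hpq)
      rwa [Fin.castPred_le_castPred_iff]
  · rintro ⟨j, g⟩ hp
    simp only [Finset.mem_sigma, Finset.mem_range, Finset.mem_filter, Finset.mem_univ,
      true_and] at hp
    have hj : j ≤ t := by omega
    have hjj : jof (extFun j g : Fin t → Fin (N + 1)) = j := jof_ext hj g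
    refine Sigma.ext hjj ?_
    rw [Fin.heq_fun_iff hjj]
    intro q
    simp only [gof]
    have hq2 := q.2
    have hq : ((Fin.castLE (jof_le (extFun j g : Fin t → Fin (N + 1))) q) : ℕ) < j := by
      rw [Fin.coe_castLE]; omega
    apply Fin.castSucc_injective
    rw [Fin.castSucc_castPred]
    simp only [extFun, hq, dif_pos]
    congr 1
  · intro f hf
    simp only [Finset.mem_filter, Finset.mem_univ, true_and] at hf
    exact ext_gof f hf
  · rintro ⟨j, g⟩ hp
    simp only [Finset.mem_sigma, Finset.mem_range, Finset.mem_filter, Finset.mem_univ,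
      true_and] at hp
    exact (extFun_prod (by omega) g x).symm

lemma hsym_one (j : ℕ) (x : Fin 1 → ℂ) : hsym 1 j x = x 0 ^ j := by
  unfold hsym
  have h1 : (univ.filter (fun f : Fin j → Fin 1 => ∀ p q : Fin j, p ≤ q → f p ≤ f q)) = univ := by
    apply Finset.filter_true_of_mem
    intro f _ p q _
    exact le_of_eq (Subsingleton.elim (f p) (f q))
  rw [h1]
  have h2 : ∀ f : Fin j → Fin 1, ∏ i, x (f i) = x 0 ^ j := by
    intro f
    calc ∏ i : Fin j, x (f i) = ∏ _i : Fin j, x 0 :=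
          Finset.prod_congr rfl fun i _ => by rw [Subsingleton.elim (f i) 0]
      _ = x 0 ^ j := by rw [Finset.prod_const, Finset.card_univ, Fintype.card_fin]
  rw [Finset.sum_congr rfl fun f _ => h2 f, Finset.sum_const, Finset.card_univ]
  have : Fintype.card (Fin j → Fin 1) = 1 := by simp
  rw [this, one_smul]

lemma univ_fin_succ (n : ℕ) :
    (univ : Finset (Fin (n + 1))) = insert (Fin.last n) (univ.map Fin.castSuccEmb) := by
  ext p
  simp only [mem_univ, true_iff, mem_insert, mem_map]
  rcases Fin.eq_castSucc_or_eq_last p with ⟨q, rfl⟩ | rfl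
  · exact Or.inr ⟨q, by simp [Fin.castSuccEmb]; rfl⟩
  · exact Or.inl rfl

lemma last_not_mem_map (n : ℕ) : Fin.last n ∉ (univ : Finset (Fin n)).map Fin.castSuccEmb := by
  intro hmem
  rw [mem_map] at hmem
  obtain ⟨q, -, hq⟩ := hmem
  exact absurd hq (Fin.ne_of_lt (Fin.castSucc_lt_last q))

lemma prod_erase_last {n : ℕ} (F : Fin (n + 2) → ℂ) :
    ∏ j ∈ univ.erase (Fin.last (n + 1)), F j = ∏ j, F (Fin.castSucc j) := by
  rw [univ_fin_succ (n + 1), Finset.erase_insert (last_not_mem_map (n + 1)), Finset.prod_map]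
  rfl

lemma prod_erase_castSucc {n : ℕ} (k : Fin (n + 1)) (F : Fin (n + 2) → ℂ) :
    ∏ j ∈ univ.erase k.castSucc, F j
      = (∏ j ∈ univ.erase k, F (Fin.castSucc j)) * F (Fin.last (n + 1)) := by
  have hne : Fin.last (n + 1) ≠ k.castSucc := (Fin.ne_of_lt (Fin.castSucc_lt_last k)).symm
  rw [univ_fin_succ (n + 1), Finset.erase_insert_of_ne hne]
  have hmape : ((univ : Finset (Fin (n + 1))).map Fin.castSuccEmb).erase k.castSucc
      = ((univ : Finset (Fin (n + 1))).erase k).map Fin.castSuccEmb := by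
    rw [Finset.map_erase]
    rfl
  rw [hmape, Finset.prod_insert (by
    intro hmem
    rw [Finset.mem_map] at hmem
    obtain ⟨q, -, hq⟩ := hmem
    exact absurd hq (Fin.ne_of_lt (Fin.castSucc_lt_last q))), Finset.prod_map]
  rw [mul_comm]
  rfl

lemma tri_reindex (M : ℕ) (G : ℕ → ℕ → ℂ) :
    ∑ t ∈ range M, ∑ j ∈ range (t + 1), G t j
      = ∑ j ∈ range M, ∑ i ∈ range (M - j), G (j + i) j := by
  rw [Finset.sum_sigma', Finset.sum_sigma']
  refine Finset.sum_nbij' (i := fun p : Σ _ : ℕ, ℕ => (⟨p.2, p.1 - p.2⟩ : Σ _ : ℕ, ℕ))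
    (j := fun p : Σ _ : ℕ, ℕ => (⟨p.1 + p.2, p.1⟩ : Σ _ : ℕ, ℕ)) ?_ ?_ ?_ ?_ ?_
  · rintro ⟨t, j⟩ hp
    simp only [mem_sigma, mem_range] at hp ⊢
    omega
  · rintro ⟨j, i⟩ hp
    simp only [mem_sigma, mem_range] at hp ⊢
    omega
  · rintro ⟨t, j⟩ hp
    simp only [mem_sigma, mem_range] at hp
    refine Sigma.ext ?_ (heq_of_eq ?_) <;> simp <;> omega
  · rintro ⟨j, i⟩ hp
    simp only [mem_sigma, mem_range] at hp
    refine Sigma.ext ?_ (heq_of_eq ?_) <;> simp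
  · rintro ⟨t, j⟩ hp
    simp only [mem_sigma, mem_range] at hp
    have : j + (t - j) = t := by omega
    simp [this]

lemma pow_split (b z : ℂ) (T : ℕ) :
    z ^ T = (∑ i ∈ range T, b ^ i * z ^ (T - 1 - i)) * (z - b) + b ^ T := by
  have h := geom_sum₂_mul b z T
  linear_combination h

lemma key' (n : ℕ) :
    ∀ (a : Fin (n + 1) → ℂ), (∀ j k, j ≠ k → a j ≠ a k) → ∀ (s : ℕ) (z : ℂ),
      z ^ s = (∑ j ∈ range (s - n), hsym (n + 1) j a * z ^ (s - 1 - n - j)) * ∏ k, (z - a k)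
        + ∑ k, (a k ^ s / ∏ j ∈ univ.erase k, (a k - a j)) * ∏ j ∈ univ.erase k, (z - a j) := by
  induction n with
  | zero =>
    intro a ha s z
    have h1 : ∀ k : Fin 1, (univ.erase k) = (∅ : Finset (Fin 1)) := by
      intro k
      apply Finset.eq_empty_of_forall_notMem
      intro j hj
      exact (Finset.mem_erase.1 hj).1 (Subsingleton.elim j k)
    simp only [Nat.reduceAdd, Fin.prod_univ_one, Fin.sum_univ_one, h1, Finset.prod_empty, hsym_one,
      Nat.sub_zero, div_one, mul_one]
    have h := geom_sum₂_mul (a 0) z s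
    linear_combination h
  | succ n IH =>
    intro a ha s z
    have ha' : ∀ j k : Fin (n + 1), j ≠ k → a j.castSucc ≠ a k.castSucc := fun j k hjk =>
      ha _ _ (fun h => hjk (Fin.castSucc_injective _ h))
    have hab : ∀ k : Fin (n + 1), a k.castSucc ≠ a (Fin.last (n + 1)) := fun k =>
      ha _ _ (Fin.ne_of_lt (Fin.castSucc_lt_last k))
    have IH1 := IH (fun k => a k.castSucc) ha' s z
    have IH2 := IH (fun k => a k.castSucc) ha' s (a (Fin.last (n + 1)))
    simp only at IH1 IH2
    -- nonvanishing facts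
    have he : ∀ k : Fin (n + 1), (∏ j ∈ univ.erase k, (a k.castSucc - a j.castSucc)) ≠ 0 := by
      intro k
      rw [Finset.prod_ne_zero_iff]
      intro j hj
      exact sub_ne_zero.2 (ha' k j (Ne.symm (Finset.mem_erase.1 hj).1))
    have hPb : (∏ j : Fin (n + 1), (a (Fin.last (n + 1)) - a j.castSucc)) ≠ 0 := by
      rw [Finset.prod_ne_zero_iff]
      intro j _
      exact sub_ne_zero.2 (Ne.symm (hab j))
    have hd : ∀ k : Fin (n + 1), a k.castSucc - a (Fin.last (n + 1)) ≠ 0 := fun k =>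
      sub_ne_zero.2 (hab k)
    have hXP : ∀ k : Fin (n + 1),
        (∏ j ∈ univ.erase k, (z - a j.castSucc)) * (z - a k.castSucc)
          = ∏ j : Fin (n + 1), (z - a j.castSucc) := fun k =>
      Finset.prod_erase_mul univ _ (Finset.mem_univ k)
    have hXbP : ∀ k : Fin (n + 1),
        (∏ j ∈ univ.erase k, (a (Fin.last (n + 1)) - a j.castSucc))
            * (a (Fin.last (n + 1)) - a k.castSucc)
          = ∏ j : Fin (n + 1), (a (Fin.last (n + 1)) - a j.castSucc) := fun k =>
      Finset.prod_erase_mul univ _ (Finset.mem_univ k)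
    -- split the products and sums over `Fin (n + 2)`
    rw [Fin.prod_univ_castSucc (f := fun k : Fin (n + 2) => z - a k),
      Fin.sum_univ_castSucc (f := fun k : Fin (n + 2) =>
        (a k ^ s / ∏ j ∈ univ.erase k, (a k - a j)) * ∏ j ∈ univ.erase k, (z - a j))]
    simp only [prod_erase_castSucc, prod_erase_last]
    -- rewrite each summand
    have hterm : ∀ k : Fin (n + 1),
        (a k.castSucc ^ s /
            ((∏ j ∈ univ.erase k, (a k.castSucc - a j.castSucc))
              * (a k.castSucc - a (Fin.last (n + 1)))))
          * ((∏ j ∈ univ.erase k, (z - a j.castSucc)) * (z - a (Fin.last (n + 1))))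
        = (a k.castSucc ^ s / ∏ j ∈ univ.erase k, (a k.castSucc - a j.castSucc))
            * (∏ j ∈ univ.erase k, (z - a j.castSucc))
          + ((a k.castSucc ^ s / ∏ j ∈ univ.erase k, (a k.castSucc - a j.castSucc))
              / (a k.castSucc - a (Fin.last (n + 1))))
            * (∏ j : Fin (n + 1), (z - a j.castSucc)) := by
      intro k
      have h1 : (∏ j ∈ univ.erase k, (z - a j.castSucc)) * (z - a (Fin.last (n + 1)))
          = (∏ j : Fin (n + 1), (z - a j.castSucc))
            + (a k.castSucc - a (Fin.last (n + 1)))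
              * (∏ j ∈ univ.erase k, (z - a j.castSucc)) := by
        linear_combination hXP k
      rw [← div_div, h1, mul_add, ← mul_assoc, div_mul_cancel₀ _ (hd k), add_comm]
    rw [Finset.sum_congr rfl fun k _ => hterm k, Finset.sum_add_distrib, ← Finset.sum_mul]
    -- the coefficient identity, from `IH2`
    have hCI : (∑ k : Fin (n + 1),
          (a k.castSucc ^ s / ∏ j ∈ univ.erase k, (a k.castSucc - a j.castSucc))
            / (a k.castSucc - a (Fin.last (n + 1))))
        + a (Fin.last (n + 1)) ^ s / (∏ j : Fin (n + 1), (a (Fin.last (n + 1)) - a j.castSucc))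
        = ∑ j ∈ range (s - n), hsym (n + 1) j (fun k => a k.castSucc)
            * a (Fin.last (n + 1)) ^ (s - 1 - n - j) := by
      have hterm2 : ∀ k : Fin (n + 1),
          (a k.castSucc ^ s / ∏ j ∈ univ.erase k, (a k.castSucc - a j.castSucc))
              / (a k.castSucc - a (Fin.last (n + 1)))
            = -((a k.castSucc ^ s / ∏ j ∈ univ.erase k, (a k.castSucc - a j.castSucc))
                * (∏ j ∈ univ.erase k, (a (Fin.last (n + 1)) - a j.castSucc)))
              / (∏ j : Fin (n + 1), (a (Fin.last (n + 1)) - a j.castSucc)) := by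
        intro k
        rw [div_eq_div_iff (hd k) hPb]
        linear_combination (-(a k.castSucc ^ s
          / ∏ j ∈ univ.erase k, (a k.castSucc - a j.castSucc))) * hXbP k
      rw [Finset.sum_congr rfl fun k _ => hterm2 k, ← Finset.sum_div]
      rw [← add_div, div_eq_iff hPb, Finset.sum_neg_distrib]
      linear_combination IH2
    have hA2 : (∑ j ∈ range (s - (n + 1)), hsym (n + 1 + 1) j a * z ^ (s - 1 - (n + 1) - j))
        = ∑ j ∈ range (s - (n + 1)), hsym (n + 1) j (fun k => a k.castSucc)
            * ∑ i ∈ range (s - 1 - n - j),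
                a (Fin.last (n + 1)) ^ i * z ^ (s - 1 - n - j - 1 - i) := by
      calc ∑ j ∈ range (s - (n + 1)), hsym (n + 1 + 1) j a * z ^ (s - 1 - (n + 1) - j)
          = ∑ t ∈ range (s - (n + 1)), ∑ j ∈ range (t + 1),
              hsym (n + 1) j (fun k => a k.castSucc) * a (Fin.last (n + 1)) ^ (t - j)
                * z ^ (s - 1 - (n + 1) - t) := by
            apply Finset.sum_congr rfl
            intro t _
            rw [hsym_succ (n + 1) t a, Finset.sum_mul]
        _ = ∑ j ∈ range (s - (n + 1)), ∑ i ∈ range ((s - (n + 1)) - j),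
              hsym (n + 1) j (fun k => a k.castSucc) * a (Fin.last (n + 1)) ^ ((j + i) - j)
                * z ^ (s - 1 - (n + 1) - (j + i)) := tri_reindex _ _
        _ = ∑ j ∈ range (s - (n + 1)), ∑ i ∈ range (s - 1 - n - j),
              hsym (n + 1) j (fun k => a k.castSucc)
                * (a (Fin.last (n + 1)) ^ i * z ^ (s - 1 - n - j - 1 - i)) := by
            apply Finset.sum_congr rfl
            intro j _
            have hr : (s - (n + 1)) - j = s - 1 - n - j := by omega
            rw [hr]
            apply Finset.sum_congr rfl
            intro i _
            have h1 : (j + i) - j = i := by omega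
            have h2 : s - 1 - (n + 1) - (j + i) = s - 1 - n - j - 1 - i := by omega
            rw [h1, h2]
            ring
        _ = ∑ j ∈ range (s - (n + 1)), hsym (n + 1) j (fun k => a k.castSucc)
              * ∑ i ∈ range (s - 1 - n - j),
                  a (Fin.last (n + 1)) ^ i * z ^ (s - 1 - n - j - 1 - i) := by
            apply Finset.sum_congr rfl
            intro j _
            rw [Finset.mul_sum]
    have hI : (∑ j ∈ range (s - n), hsym (n + 1) j (fun k => a k.castSucc) * z ^ (s - 1 - n - j))
        = (∑ j ∈ range (s - (n + 1)), hsym (n + 1 + 1) j a * z ^ (s - 1 - (n + 1) - j))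
            * (z - a (Fin.last (n + 1)))
          + ∑ j ∈ range (s - n), hsym (n + 1) j (fun k => a k.castSucc)
              * a (Fin.last (n + 1)) ^ (s - 1 - n - j) := by
      rcases le_or_gt s n with hsn | hsn
      · have h1 : s - n = 0 := by omega
        have h2 : s - (n + 1) = 0 := by omega
        simp [h1, h2]
      · have hM : s - n = (s - (n + 1)) + 1 := by omega
        rw [hM, Finset.sum_range_succ, Finset.sum_range_succ]
        have h0 : s - 1 - n - (s - (n + 1)) = 0 := by omega
        rw [h0, pow_zero, pow_zero, hA2]
        have hstep : ∀ j ∈ range (s - (n + 1)),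
            hsym (n + 1) j (fun k => a k.castSucc) * z ^ (s - 1 - n - j)
              = hsym (n + 1) j (fun k => a k.castSucc)
                  * (∑ i ∈ range (s - 1 - n - j),
                      a (Fin.last (n + 1)) ^ i * z ^ (s - 1 - n - j - 1 - i))
                  * (z - a (Fin.last (n + 1)))
                + hsym (n + 1) j (fun k => a k.castSucc)
                    * a (Fin.last (n + 1)) ^ (s - 1 - n - j) := by
          intro j _
          have h := pow_split (a (Fin.last (n + 1))) z (s - 1 - n - j)
          linear_combination (hsym (n + 1) j fun k => a k.castSucc) * h
        rw [Finset.sum_congr rfl hstep, Finset.sum_add_distrib, Finset.sum_mul]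
        ring
    linear_combination IH1 + (∏ j : Fin (n + 1), (z - a j.castSucc)) * hI
      - (∏ j : Fin (n + 1), (z - a j.castSucc)) * hCI

lemma key (n : ℕ) (a : Fin (n + 1) → ℂ) (ha : ∀ j k, j ≠ k → a j ≠ a k) (s : ℕ) (z : ℂ)
    (hz : ∀ k, z ≠ a k) :
    z ^ s / ∏ k, (z - a k)
      = (∑ j ∈ range (s - n), hsym (n + 1) j a * z ^ (s - 1 - n - j))
        + ∑ k, a k ^ s / ((∏ j ∈ univ.erase k, (a k - a j)) * (z - a k)) := by
  have h0 : ∀ k, z - a k ≠ 0 := fun k => sub_ne_zero.2 (hz k)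
  have hP : (∏ k, (z - a k)) ≠ 0 := Finset.prod_ne_zero_iff.2 fun k _ => h0 k
  have he : ∀ k : Fin (n + 1), (∏ j ∈ univ.erase k, (a k - a j)) ≠ 0 := by
    intro k
    rw [Finset.prod_ne_zero_iff]
    intro j hj
    exact sub_ne_zero.2 (ha k j (Ne.symm (Finset.mem_erase.1 hj).1))
  rw [key' n a ha s z, add_div, Finset.sum_div]
  congr 1
  · exact mul_div_cancel_right₀ _ hP
  · apply Finset.sum_congr rfl
    intro k _
    have hXp : (∏ j ∈ univ.erase k, (z - a j)) * (z - a k) = ∏ j, (z - a j) :=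
      Finset.prod_erase_mul univ _ (Finset.mem_univ k)
    rw [div_eq_div_iff hP (mul_ne_zero (he k) (h0 k))]
    linear_combination ((∏ j ∈ univ.erase k, (z - a j)) * (z - a k))
        * div_mul_cancel₀ (a k ^ s) (he k) + a k ^ s * hXp

lemma zpow_helper (w : ℂ) (ϑ : ℤ) (h : 0 ≤ ϑ ∨ w ≠ 0) (t : ℕ) :
    w ^ ϑ * (w ^ 2) ^ t = w ^ (ϑ + 2 * t) := by
  have h2 : (w ^ 2) ^ t = w ^ (2 * t) := by rw [← pow_mul]
  rcases h with h | h
  · obtain ⟨c, rfl⟩ := Int.eq_ofNat_of_zero_le h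
    rw [h2, zpow_natCast,
      show ((c : ℤ) + 2 * t) = ((c + 2 * t : ℕ) : ℤ) by push_cast; ring, zpow_natCast]
    rw [← pow_add]
  · rw [h2, ← zpow_natCast w (2 * t), ← zpow_add₀ h]
    try congr 1
    try omega

theorem monomial_partial_fraction (n : ℕ) (γ : Fin (n + 1) → ℂ)
    (hγ0 : ∀ k, γ k ≠ 0)
    (hγ : ∀ j k, j ≠ k → γ j ^ 2 ≠ γ k ^ 2)
    (m : ℕ) (ϑ : ℤ) (hϑ : ϑ ≤ (m : ℤ) + n)
    (hpar : ϑ % 2 = ((m : ℤ) + n) % 2)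
    (w : ℂ) (hw : ∀ k, w ^ 2 ≠ γ k ^ 2) (hw0 : ϑ < 0 → w ≠ 0) :
    w ^ (m + n) / ∏ k, (w ^ 2 - γ k ^ 2)
      = (∑ j ∈ Finset.range (((m : ℤ) - n - ϑ) / 2).toNat,
          hsym (n + 1) j (fun k => γ k ^ 2) * w ^ ((m : ℤ) - n - 2 - 2 * j))
        + ∑ k, γ k ^ ((m : ℤ) + n - ϑ) * w ^ ϑ /
            ((∏ j ∈ univ.erase k, (γ k ^ 2 - γ j ^ 2)) * (w ^ 2 - γ k ^ 2)) := by
  obtain ⟨s, hs⟩ : ∃ s : ℕ, (m : ℤ) + n - ϑ = 2 * s := ⟨(((m : ℤ) + n - ϑ) / 2).toNat, by omega⟩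
  have hkey := key n (fun k => γ k ^ 2) hγ s (w ^ 2) (fun k => hw k)
  have hor : 0 ≤ ϑ ∨ w ≠ 0 := by
    rcases lt_or_ge ϑ 0 with h | h
    · exact Or.inr (hw0 h)
    · exact Or.inl h
  have hrange : (((m : ℤ) - n - ϑ) / 2).toNat = s - n := by omega
  calc w ^ (m + n) / ∏ k, (w ^ 2 - γ k ^ 2)
      = w ^ ϑ * ((w ^ 2) ^ s / ∏ k, (w ^ 2 - γ k ^ 2)) := by
        rw [mul_div_assoc']
        congr 1
        rw [zpow_helper w ϑ hor s, ← zpow_natCast w (m + n)]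
        congr 1
        push_cast
        omega
    _ = w ^ ϑ * ((∑ j ∈ range (s - n), hsym (n + 1) j (fun k => γ k ^ 2) * (w ^ 2) ^ (s - 1 - n - j))
          + ∑ k, (γ k ^ 2) ^ s /
              ((∏ j ∈ univ.erase k, (γ k ^ 2 - γ j ^ 2)) * (w ^ 2 - γ k ^ 2))) := by rw [hkey]
    _ = _ := by
        rw [mul_add, Finset.mul_sum, Finset.mul_sum]
        congr 1
        · rw [hrange]
          apply Finset.sum_congr rfl
          intro j hj
          rw [Finset.mem_range] at hj
          rw [mul_left_comm]
          congr 1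
          rw [zpow_helper w ϑ hor (s - 1 - n - j)]
          congr 1
          omega
        · apply Finset.sum_congr rfl
          intro k _
          rw [mul_div_assoc']
          congr 1
          have hγs : (γ k ^ 2) ^ s = γ k ^ ((m : ℤ) + n - ϑ) := by
            rw [hs, ← pow_mul,
              show ((2 : ℤ) * s) = ((2 * s : ℕ) : ℤ) by push_cast; ring, zpow_natCast]
          rw [hγs, mul_comm]
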